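/- Let V be a 5-dimensional k-vector space with basis e₀,…,e₄ and let N = [[e₁,e₂],[e₃,e₄]] ∈ Mat₂ₓ₂(V). If g, h ∈ GL₂(k) and λ ∈ k* satisfy g·N·h = λ·N, then g and h are diagonal or anti-diagonal in a compatible way; in particular if additionally g·N·h = λN with the entries e₁,e₂,e₃,e₄ held fixed (not permuted), then g and h are scalar matrices. -/
import Mathlib


/- STATEMENT 12: For `N = [[e₁,e₂],[e₃,e₄]]` (e₁,…,e₄ linearly independent in a
5-dimensional space V), if `g·N·h = λ·N` then `g` and `h` are diagonal or anti-diagonal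
in a compatible way; in particular (since the entries are held fixed, not permuted)
`g` and `h` are scalar matrices. -/

theorem stabilizer_T4
    {k V : Type} [Field k] [IsAlgClosed k] [CharZero k]
    [AddCommGroup V] [Module k V] [FiniteDimensional k V]
    (hV : Module.finrank k V = 5)
    (e : Fin 4 → V) (hli : LinearIndependent k e)
    (g h : GL (Fin 2) k) (lam : k) (hlam : lam ≠ 0)
    (heq : ∀ i j : Fin 2,
      (∑ a : Fin 2, ∑ b : Fin 2,
          ((g : Matrix (Fin 2) (Fin 2) k) i a * (h : Matrix (Fin 2) (Fin 2) k) b j) •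
            (Matrix.of ![![e 0, e 1], ![e 2, e 3]]) a b)
        = lam • (Matrix.of ![![e 0, e 1], ![e 2, e 3]]) i j) :
    (((g : Matrix (Fin 2) (Fin 2) k) 0 1 = 0 ∧ (g : Matrix (Fin 2) (Fin 2) k) 1 0 = 0 ∧
      (h : Matrix (Fin 2) (Fin 2) k) 0 1 = 0 ∧ (h : Matrix (Fin 2) (Fin 2) k) 1 0 = 0) ∨
     ((g : Matrix (Fin 2) (Fin 2) k) 0 0 = 0 ∧ (g : Matrix (Fin 2) (Fin 2) k) 1 1 = 0 ∧
      (h : Matrix (Fin 2) (Fin 2) k) 0 0 = 0 ∧ (h : Matrix (Fin 2) (Fin 2) k) 1 1 = 0)) ∧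
    (∃ c : k, (g : Matrix (Fin 2) (Fin 2) k) = c • (1 : Matrix (Fin 2) (Fin 2) k)) ∧
    (∃ d : k, (h : Matrix (Fin 2) (Fin 2) k) = d • (1 : Matrix (Fin 2) (Fin 2) k)) := by
  set G := (g : Matrix (Fin 2) (Fin 2) k) with hGdef
  set H := (h : Matrix (Fin 2) (Fin 2) k) with hHdef
  have hzero : ∀ c : Fin 4 → k,
      c 0 • e 0 + c 1 • e 1 + c 2 • e 2 + c 3 • e 3 = 0 → ∀ m, c m = 0 := by
    intro c hc m
    exact Fintype.linearIndependent_iff.mp hli c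
      (by simpa [Fin.sum_univ_four] using hc) m
  have key : ∀ i j a b : Fin 2, G i a * H b j = if a = i ∧ b = j then lam else 0 := by
    intro i j a b
    have h1 := heq i j
    fin_cases i <;> fin_cases j <;>
      simp only [Fin.mk_zero, Fin.mk_one, Fin.sum_univ_two, Matrix.of_apply, Matrix.cons_val',
        Matrix.cons_val_zero, Matrix.cons_val_one, Matrix.head_cons, Matrix.empty_val',
        Matrix.cons_val_fin_one, Matrix.head_fin_const] at h1
    · have hc := hzero
        ![G 0 0 * H 0 0 - lam, G 0 0 * H 1 0, G 0 1 * H 0 0, G 0 1 * H 1 0]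
        (by simp only [Matrix.cons_val_zero, Matrix.cons_val_one, Matrix.head_cons,
              Matrix.cons_val_two, Matrix.tail_cons, Matrix.cons_val_three]
            linear_combination (norm := module) h1)
      fin_cases a <;> fin_cases b <;>
        first
        | simpa [sub_eq_zero] using hc 0
        | simpa [sub_eq_zero] using hc 1
        | simpa [sub_eq_zero] using hc 2
        | simpa [sub_eq_zero] using hc 3
    · have hc := hzero
        ![G 0 0 * H 0 1, G 0 0 * H 1 1 - lam, G 0 1 * H 0 1, G 0 1 * H 1 1]
        (by simp only [Matrix.cons_val_zero, Matrix.cons_val_one, Matrix.head_cons,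
              Matrix.cons_val_two, Matrix.tail_cons, Matrix.cons_val_three]
            linear_combination (norm := module) h1)
      fin_cases a <;> fin_cases b <;>
        first
        | simpa [sub_eq_zero] using hc 0
        | simpa [sub_eq_zero] using hc 1
        | simpa [sub_eq_zero] using hc 2
        | simpa [sub_eq_zero] using hc 3
    · have hc := hzero
        ![G 1 0 * H 0 0, G 1 0 * H 1 0, G 1 1 * H 0 0 - lam, G 1 1 * H 1 0]
        (by simp only [Matrix.cons_val_zero, Matrix.cons_val_one, Matrix.head_cons,
              Matrix.cons_val_two, Matrix.tail_cons, Matrix.cons_val_three]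
            linear_combination (norm := module) h1)
      fin_cases a <;> fin_cases b <;>
        first
        | simpa [sub_eq_zero] using hc 0
        | simpa [sub_eq_zero] using hc 1
        | simpa [sub_eq_zero] using hc 2
        | simpa [sub_eq_zero] using hc 3
    · have hc := hzero
        ![G 1 0 * H 0 1, G 1 0 * H 1 1, G 1 1 * H 0 1, G 1 1 * H 1 1 - lam]
        (by simp only [Matrix.cons_val_zero, Matrix.cons_val_one, Matrix.head_cons,
              Matrix.cons_val_two, Matrix.tail_cons, Matrix.cons_val_three]
            linear_combination (norm := module) h1)
      fin_cases a <;> fin_cases b <;>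
        first
        | simpa [sub_eq_zero] using hc 0
        | simpa [sub_eq_zero] using hc 1
        | simpa [sub_eq_zero] using hc 2
        | simpa [sub_eq_zero] using hc 3
  have h0000 : G 0 0 * H 0 0 = lam := by simpa using key 0 0 0 0
  have hG00 : G 0 0 ≠ 0 := left_ne_zero_of_mul (h0000 ▸ hlam)
  have hH00 : H 0 0 ≠ 0 := right_ne_zero_of_mul (h0000 ▸ hlam)
  have hG01 : G 0 1 = 0 := by
    have := key 0 0 1 0; simp at this
    exact this.resolve_right hH00
  have hG10 : G 1 0 = 0 := by
    have := key 1 0 0 0; simp at this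
    exact this.resolve_right hH00
  have hH01 : H 0 1 = 0 := by
    have := key 0 1 0 0; simp at this
    exact this.resolve_left hG00
  have hH10 : H 1 0 = 0 := by
    have := key 0 0 0 1; simp at this
    exact this.resolve_left hG00
  have hG11 : G 1 1 = G 0 0 := by
    have h2 : G 1 1 * H 0 0 = lam := by simpa using key 1 0 1 0
    have := h2.trans h0000.symm
    exact mul_right_cancel₀ hH00 this
  have hH11 : H 1 1 = H 0 0 := by
    have h2 : G 0 0 * H 1 1 = lam := by simpa using key 0 1 0 1
    have := h2.trans h0000.symm
    exact mul_left_cancel₀ hG00 this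
  refine ⟨Or.inl ⟨hG01, hG10, hH01, hH10⟩, ⟨G 0 0, ?_⟩, ⟨H 0 0, ?_⟩⟩
  · ext i j
    fin_cases i <;> fin_cases j <;>
      simp [hG01, hG10, hG11, Matrix.one_apply]
  · ext i j
    fin_cases i <;> fin_cases j <;>
      simp [hH01, hH10, hH11, Matrix.one_apply]
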